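/- Let R be a commutative ring, X an indeterminate over R, A = R[X] the polynomial ring, J an ideal of A, q an associated prime of the A-module A/J, and p = q ∩ R. For each integer k ≥ 0, let a_k denote the set of all a ∈ R for which there exists a polynomial of the form a₀ + a₁X + ⋯ + a_{k-1}X^{k-1} + aX^k in J. Then a₀ ⊆ a₁ ⊆ a₂ ⊆ ⋯ is an ascending chain of ideals of R, and there exists an integer n ≥ 0 such that p is an associated prime of the R-module R/a_n. -/

import Mathlib

/-- Let `J` be an ideal of `A = R[X]`, `q` an associated prime of the `A`-module `A ⧸ J`
and `p = q ∩ R`.  For `k ≥ 0` let `a k` be the ideal of all `a ∈ R` for which some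
polynomial of the form `a₀ + a₁X + ⋯ + a_(k-1)X^(k-1) + aX^k` lies in `J` (i.e. the image
under the `k`-th coefficient map of the polynomials in `J` of degree at most `k`).  Then
the `a k` form an ascending chain of ideals of `R`, and `p` is an associated prime of
`R ⧸ a n` for some `n ≥ 0`. -/
theorem exists_associated_prime_of_coeff_ideals {R : Type*} [CommRing R]
    (J : Ideal (Polynomial R)) (q : Ideal (Polynomial R))
    (hq : q ∈ associatedPrimes (Polynomial R) (Polynomial R ⧸ J))
    (p : Ideal R) (hp : p = q.comap (Polynomial.C : R →+* Polynomial R))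
    (a : ℕ → Ideal R)
    (ha : ∀ k : ℕ, a k = Submodule.map (Polynomial.lcoeff R k)
      (J.restrictScalars R ⊓ Polynomial.degreeLE R (k : WithBot ℕ))) :
    Monotone a ∧ ∃ n : ℕ, p ∈ associatedPrimes R (R ⧸ a n) := by
  subst hp
  -- membership criterion for `a k`
  have hamem : ∀ (k : ℕ) (x : R), x ∈ a k ↔
      ∃ f : Polynomial R, f ∈ J ∧ f.degree ≤ (k : WithBot ℕ) ∧ f.coeff k = x := by
    intro k x
    rw [ha k]
    constructor
    · rintro ⟨f, ⟨hfJ, hfd⟩, hfc⟩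
      exact ⟨f, hfJ, (Polynomial.mem_degreeLE).mp hfd, hfc⟩
    · rintro ⟨f, hfJ, hfd, hfc⟩
      exact ⟨f, ⟨hfJ, (Polynomial.mem_degreeLE).mpr hfd⟩, hfc⟩
  have hmono : Monotone a := by
    apply monotone_nat_of_le_succ
    intro k x hx
    rw [hamem] at hx ⊢
    obtain ⟨f, hfJ, hfd, hfc⟩ := hx
    refine ⟨Polynomial.X * f, J.mul_mem_left _ hfJ, ?_, ?_⟩
    · calc (Polynomial.X * f).degree ≤ Polynomial.X.degree + f.degree :=
        Polynomial.degree_mul_le _ _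
      _ ≤ 1 + (k : WithBot ℕ) := by
          exact add_le_add Polynomial.degree_X_le hfd
      _ = ((k + 1 : ℕ) : WithBot ℕ) := by push_cast; ring
    · rw [Polynomial.coeff_X_mul]; exact hfc
  refine ⟨hmono, ?_⟩
  obtain ⟨hqprime, y, hy⟩ := hq
  have hradA : ∀ (f g : Polynomial R), f ∈ ((⊥ : Submodule (Polynomial R) (Polynomial R ⧸ J)).colon
      {(Ideal.Quotient.mk J g : Polynomial R ⧸ J)}).radical ↔ ∃ k : ℕ, f ^ k * g ∈ J := by
    intro f g
    simp only [Ideal.mem_radical_iff, Submodule.mem_colon_singleton, Submodule.mem_bot]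
    exact exists_congr fun k => Ideal.Quotient.eq_zero_iff_mem
  have hy0 : y ≠ 0 := by
    rintro rfl
    apply hqprime.ne_top
    rw [hy, Ideal.radical_eq_top, Ideal.eq_top_iff_one, Submodule.mem_colon_singleton, smul_zero]
    exact Submodule.zero_mem _
  -- the predicate for the minimal degree
  set P : ℕ → Prop := fun n => ∃ g : Polynomial R,
    Ideal.Quotient.mk J g ≠ 0 ∧ g.natDegree ≤ n ∧
      q = ((⊥ : Submodule (Polynomial R) (Polynomial R ⧸ J)).colon
        {(Ideal.Quotient.mk J g : Polynomial R ⧸ J)}).radical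
    with hP
  have hPex : ∃ n, P n := by
    obtain ⟨g, rfl⟩ := Ideal.Quotient.mk_surjective y
    exact ⟨g.natDegree, g, hy0, le_rfl, hy⟩
  classical
  set n := Nat.find hPex with hn
  obtain ⟨g, hg0, hgdeg, hgann⟩ := Nat.find_spec hPex
  -- g has natDegree exactly n
  have hgdeg' : g.natDegree = n := by
    refine le_antisymm hgdeg ?_
    exact Nat.find_le ⟨g, hg0, le_rfl, hgann⟩
  have hgne : g ≠ 0 := fun h => hg0 (by rw [h, map_zero])
  -- membership criterion for q
  have hqmem : ∀ f : Polynomial R, f ∈ q ↔ ∃ k : ℕ, f ^ k * g ∈ J := by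
    intro f
    rw [hgann, hradA]
  set c := g.coeff n with hc
  refine ⟨n, hqprime.comap _, Ideal.Quotient.mk (a n) c, ?_⟩
  ext r
  have hradR : r ∈ ((⊥ : Submodule R (R ⧸ a n)).colon
      {(Ideal.Quotient.mk (a n) c : R ⧸ a n)}).radical ↔ ∃ k : ℕ, r ^ k * c ∈ a n := by
    simp only [Ideal.mem_radical_iff, Submodule.mem_colon_singleton, Submodule.mem_bot]
    exact exists_congr fun k => Ideal.Quotient.eq_zero_iff_mem
  rw [Ideal.mem_comap, hqmem, hradR]
  constructor
  · rintro ⟨k, h⟩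
    refine ⟨k, (hamem n _).mpr ⟨Polynomial.C (r ^ k) * g, by rwa [Polynomial.C_pow], ?_, ?_⟩⟩
    · calc (Polynomial.C (r ^ k) * g).degree ≤ (Polynomial.C (r ^ k)).degree + g.degree :=
        Polynomial.degree_mul_le _ _
      _ ≤ 0 + g.degree := add_le_add Polynomial.degree_C_le le_rfl
      _ = g.degree := zero_add _
      _ ≤ (n : WithBot ℕ) := by
          rw [← hgdeg']; exact Polynomial.degree_le_natDegree
    · rw [Polynomial.coeff_C_mul]
  · rintro ⟨k, hk⟩
    obtain ⟨h, hhJ, hhd, hhc⟩ := (hamem n _).mp hk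
    by_contra hrg
    have hrq : Polynomial.C r ∉ q := fun hr => hrg ((hqmem _).mp hr)
    set s := r ^ k with hs
    have hsq : Polynomial.C s ∉ q := by
      rw [hs, Polynomial.C_pow]
      exact fun h' => hrq (hqprime.mem_of_pow_mem _ h')
    set g' := Polynomial.C s * g - h with hg'
    have hg'0 : Ideal.Quotient.mk J g' ≠ 0 := by
      rw [hg', map_sub, (Ideal.Quotient.eq_zero_iff_mem).mpr hhJ, sub_zero]
      rw [Ne, Ideal.Quotient.eq_zero_iff_mem]
      exact fun h' => hsq ((hqmem _).mpr ⟨1, by rwa [pow_one]⟩)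
    have hg'ne : g' ≠ 0 := fun h => hg'0 (by rw [h, map_zero])
    have hg'deg : g'.degree < (n : WithBot ℕ) := by
      rw [hg', Polynomial.degree_lt_iff_coeff_zero]
      intro m hm
      rcases lt_or_eq_of_le hm with hm' | hm'
      · have h1 : (Polynomial.C s * g).coeff m = 0 := by
          apply Polynomial.coeff_eq_zero_of_degree_lt
          calc (Polynomial.C s * g).degree ≤ (Polynomial.C s).degree + g.degree :=
            Polynomial.degree_mul_le _ _
          _ ≤ 0 + g.degree := add_le_add Polynomial.degree_C_le le_rfl
          _ = g.degree := zero_add _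
          _ ≤ (n : WithBot ℕ) := by rw [← hgdeg']; exact Polynomial.degree_le_natDegree
          _ < m := by exact_mod_cast hm'
        have h2 : h.coeff m = 0 := Polynomial.coeff_eq_zero_of_degree_lt (lt_of_le_of_lt hhd (by exact_mod_cast hm'))
        simp [Polynomial.coeff_sub, h1, h2]
      · have hmn : m = n := by exact_mod_cast hm'.symm
        subst hmn
        rw [Polynomial.coeff_sub, Polynomial.coeff_C_mul, hhc, ← hc, sub_self]
    have hg'nat : g'.natDegree < n :=
      (Polynomial.natDegree_lt_iff_degree_lt hg'ne).mpr hg'deg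
    have hcase : q = ((⊥ : Submodule (Polynomial R) (Polynomial R ⧸ J)).colon
        {(Ideal.Quotient.mk J g' : Polynomial R ⧸ J)}).radical := by
      ext t
      rw [hradA]
      constructor
      · intro ht
        obtain ⟨m, hm⟩ := (hqmem t).mp ht
        refine ⟨m, ?_⟩
        rw [hg', mul_sub]
        refine J.sub_mem ?_ (J.mul_mem_left _ hhJ)
        have : t ^ m * (Polynomial.C s * g) = Polynomial.C s * (t ^ m * g) := by ring
        rw [this]
        exact J.mul_mem_left _ hm
      · rintro ⟨m, hm⟩
        have htC : t ^ m * Polynomial.C s ∈ q := by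
          rw [hqmem]
          refine ⟨1, ?_⟩
          have : (t ^ m * Polynomial.C s) ^ 1 * g = t ^ m * g' + t ^ m * h := by rw [hg']; ring
          rw [this]
          exact J.add_mem hm (J.mul_mem_left _ hhJ)
        rcases hqprime.mem_or_mem htC with h' | h'
        · exact hqprime.mem_of_pow_mem _ h'
        · exact absurd h' hsq
    have : P g'.natDegree := ⟨g', hg'0, le_rfl, hcase⟩
    exact absurd (Nat.find_le this) (not_le.mpr hg'nat)
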